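/- arXiv:0810.1174 — 2 statements merged into one kernel-verified Lean document; each statement's English description precedes it below -/
import Mathlib

section
/- Suppose $d_2 = 0$ and $d_1 < \lambda_0$ (so $d_+ = d_1 - \lambda_0 < 0$) and $\tilde G > 0$, $L + d_1 - \lambda_0 > 0$. Then the eigenvalue $\lambda = \frac{-2 G_+ d_+}{G_+ + L_+ + \sqrt{(G_+ + L_+)^2 - 4 G_+ d_+}}$ of the two-phase system is strictly positive, and $\lambda \to 0$ as $\tilde G \to 0^+$ with asymptotic $\lambda \sim \frac{\tilde G(\lambda_0 - d_1)}{L + d_1 - \lambda_0}$. -/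
open Real Set Filter

/-- With `d₂ = 0`, `d₁ < λ₀`, `G̃ > 0` and `L + d₁ - λ₀ > 0`, the eigenvalue
`λ(G̃) = -2G̃d₊/(G̃+L₊+√((G̃+L₊)²-4G̃d₊))` is positive, tends to `0` as `G̃ → 0⁺`,
with asymptotic `λ ∼ G̃(λ₀-d₁)/(L+d₁-λ₀)`. -/
theorem two_phase_positive_eigenvalue (d1 L lam0 : ℝ)
    (hd1 : 0 < d1) (hlam0 : 0 < lam0) (hd1lam : d1 < lam0)
    (hLp : 0 < L + d1 - lam0) :
    (∀ Gt : ℝ, 0 < Gt →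
      0 < -2 * Gt * (d1 - lam0)
        / (Gt + (L + d1 - lam0)
          + Real.sqrt ((Gt + (L + d1 - lam0))^2 - 4 * Gt * (d1 - lam0)))) ∧
    Tendsto (fun Gt : ℝ => -2 * Gt * (d1 - lam0)
        / (Gt + (L + d1 - lam0)
          + Real.sqrt ((Gt + (L + d1 - lam0))^2 - 4 * Gt * (d1 - lam0))))
      (nhdsWithin 0 (Set.Ioi 0)) (nhds 0) ∧
    Tendsto (fun Gt : ℝ => (-2 * Gt * (d1 - lam0)
        / (Gt + (L + d1 - lam0)
          + Real.sqrt ((Gt + (L + d1 - lam0))^2 - 4 * Gt * (d1 - lam0))))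
        / (Gt * (lam0 - d1) / (L + d1 - lam0)))
      (nhdsWithin 0 (Set.Ioi 0)) (nhds 1) := by
  have hlamd : lam0 - d1 = -(d1 - lam0) := by ring
  rw [hlamd]
  set Lp := L + d1 - lam0 with hLpdef
  set dp := d1 - lam0 with hdpdef
  have hdpneg : dp < 0 := by rw [hdpdef]; linarith
  clear_value Lp dp
  clear hLpdef hdpdef hlamd
  -- denominator positivity
  have hDpos : ∀ Gt : ℝ, 0 < Gt →
      0 < Gt + Lp + Real.sqrt ((Gt + Lp)^2 - 4 * Gt * dp) := by
    intro Gt hGt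
    have hs : 0 ≤ Real.sqrt ((Gt + Lp)^2 - 4 * Gt * dp) := Real.sqrt_nonneg _
    linarith
  have hpos : ∀ Gt : ℝ, 0 < Gt →
      0 < -2 * Gt * dp / (Gt + Lp + Real.sqrt ((Gt + Lp)^2 - 4 * Gt * dp)) := by
    intro Gt hGt
    exact div_pos (by nlinarith) (hDpos Gt hGt)
  -- denominator tends to 2*Lp
  have hc : Continuous (fun Gt : ℝ => Gt + Lp + Real.sqrt ((Gt + Lp)^2 - 4 * Gt * dp)) := by
    continuity
  have hD : Tendsto (fun Gt : ℝ => Gt + Lp + Real.sqrt ((Gt + Lp)^2 - 4 * Gt * dp))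
      (nhdsWithin (0:ℝ) (Set.Ioi 0)) (nhds (2 * Lp)) := by
    have h0 : (0:ℝ) + Lp + Real.sqrt (((0:ℝ) + Lp)^2 - 4 * 0 * dp) = 2 * Lp := by
      rw [show ((0:ℝ) + Lp)^2 - 4 * 0 * dp = Lp^2 by ring, Real.sqrt_sq hLp.le]
      ring
    have := (hc.tendsto 0).mono_left (nhdsWithin_le_nhds (s := Set.Ioi (0:ℝ)))
    rwa [h0] at this
  -- numerator tends to 0
  have hN : Tendsto (fun Gt : ℝ => -2 * Gt * dp) (nhdsWithin (0:ℝ) (Set.Ioi 0)) (nhds 0) := by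
    have hc2 : Continuous (fun Gt : ℝ => -2 * Gt * dp) := by continuity
    have := (hc2.tendsto 0).mono_left (nhdsWithin_le_nhds (s := Set.Ioi (0:ℝ)))
    simpa using this
  refine ⟨hpos, ?_, ?_⟩
  · have := hN.div hD (by linarith)
    simpa [Pi.div_def] using this
  · have hlim : Tendsto (fun Gt : ℝ =>
        2 * Lp / (Gt + Lp + Real.sqrt ((Gt + Lp)^2 - 4 * Gt * dp)))
        (nhdsWithin (0:ℝ) (Set.Ioi 0)) (nhds 1) := by
      have h := (tendsto_const_nhds (α := ℝ) (x := 2 * Lp)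
        (f := nhdsWithin (0:ℝ) (Set.Ioi 0))).div hD (by linarith)
      simpa [div_self (show (2:ℝ) * Lp ≠ 0 by linarith), Pi.div_def] using h
    have heq : (fun Gt : ℝ =>
        2 * Lp / (Gt + Lp + Real.sqrt ((Gt + Lp)^2 - 4 * Gt * dp)))
        =ᶠ[nhdsWithin (0:ℝ) (Set.Ioi 0)]
        (fun Gt : ℝ => (-2 * Gt * dp / (Gt + Lp + Real.sqrt ((Gt + Lp)^2 - 4 * Gt * dp)))
          / (Gt * -dp / Lp)) := by
      filter_upwards [self_mem_nhdsWithin] with Gt hGt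
      have hGt : (0:ℝ) < Gt := hGt
      have hD' := hDpos Gt hGt
      set s := Real.sqrt ((Gt + Lp)^2 - 4 * Gt * dp) with hs
      have hDne : Gt + Lp + s ≠ 0 := ne_of_gt hD'
      have hGtne : Gt ≠ 0 := ne_of_gt hGt
      have hdpne : dp ≠ 0 := ne_of_lt hdpneg
      have hLpne : Lp ≠ 0 := ne_of_gt hLp
      field_simp
    exact hlim.congr' heq
end

section
/- Let $S : [0,\infty) \to (0,\infty)$ be a differentiable function satisfying the differential inequality $S'(t) \le C S(t) \frac{\alpha_1 \theta^n}{\theta^n + (C_3 S(t))^n}$ with positive constants $C, \alpha_1, \theta, C_3, n$. Then there exist $a > 0$ and $t_0 \ge 0$ such that $\Sigma(t) = a(t + t_0)^{1/n}$ is a supersolution (i.e. $\Sigma' \ge C\Sigma \frac{\alpha_1\theta^n}{\theta^n + (C_3\Sigma)^n}$ for all $t \ge 0$ and $\Sigma(0) \ge S(0)$), and consequently $S(t) \le a(t+t_0)^{1/n}$ for all $t \ge 0$. -/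
open Real Set Filter

/-- Subpolynomial growth: if `S' ≤ C S α₁θⁿ/(θⁿ+(C₃S)ⁿ)` then `Σ(t) = a(t+t₀)^{1/n}`
is a supersolution for suitable `a > 0`, `t₀ ≥ 0`, and `S(t) ≤ a(t+t₀)^{1/n}`. -/
theorem subpolynomial_growth (C α1 θ C3 n : ℝ)
    (hC : 0 < C) (hα1 : 0 < α1) (hθ : 0 < θ) (hC3 : 0 < C3) (hn : 0 < n)
    (S S' : ℝ → ℝ)
    (hSpos : ∀ t : ℝ, 0 ≤ t → 0 < S t)
    (hS : ∀ t : ℝ, 0 ≤ t → HasDerivAt S (S' t) t)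
    (hineq : ∀ t : ℝ, 0 ≤ t →
      S' t ≤ C * S t * (α1 * θ ^ n / (θ ^ n + (C3 * S t) ^ n))) :
    ∃ a : ℝ, 0 < a ∧ ∃ t0 : ℝ, 0 ≤ t0 ∧
      (∀ t : ℝ, 0 ≤ t →
        C * (a * (t + t0) ^ (1/n))
            * (α1 * θ ^ n / (θ ^ n + (C3 * (a * (t + t0) ^ (1/n))) ^ n))
          ≤ a / n * (t + t0) ^ (1/n - 1)) ∧
      S 0 ≤ a * t0 ^ (1/n) ∧
      (∀ t : ℝ, 0 ≤ t → S t ≤ a * (t + t0) ^ (1/n)) := by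
  set a : ℝ := (n * C * α1) ^ (1/n) * θ / C3 with ha_def
  have ha : 0 < a := by
    apply div_pos (mul_pos _ hθ) hC3
    exact rpow_pos_of_pos (by positivity) _
  have hθn : (0:ℝ) < θ ^ n := rpow_pos_of_pos hθ _
  have h0 : ((n * C * α1 : ℝ) ^ (1/n)) ^ n = n * C * α1 := by
    rw [← rpow_mul (by positivity : (0:ℝ) ≤ n * C * α1), one_div_mul_cancel hn.ne',
      rpow_one]
  have ha_n : C3 ^ n * a ^ n = n * C * α1 * θ ^ n := by
    have hC3n : (0:ℝ) < C3 ^ n := rpow_pos_of_pos hC3 _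
    rw [ha_def, div_rpow (by positivity) hC3.le, mul_comm,
      div_mul_cancel₀ _ hC3n.ne', mul_rpow (by positivity) hθ.le, h0]
  set t0 : ℝ := (S 0 / a + 1) ^ n with ht0_def
  have hS0 : 0 < S 0 := hSpos 0 le_rfl
  have hbase : (0:ℝ) < S 0 / a + 1 := by positivity
  have ht0 : 0 < t0 := rpow_pos_of_pos hbase _
  have ht0root : t0 ^ (1/n) = S 0 / a + 1 := by
    rw [ht0_def, ← rpow_mul hbase.le, mul_one_div_cancel hn.ne', rpow_one]
  have hinit : S 0 ≤ a * t0 ^ (1/n) := by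
    rw [ht0root, mul_add, mul_one, mul_div_cancel₀ _ ha.ne']
    linarith
  clear_value t0 a
  -- strict supersolution property
  have hsuper : ∀ t : ℝ, 0 ≤ t →
      C * (a * (t + t0) ^ (1/n))
          * (α1 * θ ^ n / (θ ^ n + (C3 * (a * (t + t0) ^ (1/n))) ^ n))
        < a / n * (t + t0) ^ (1/n - 1) := by
    intro t ht
    have hu : (0:ℝ) < t + t0 := by linarith
    have hv : (0:ℝ) < (t + t0) ^ (1/n) := rpow_pos_of_pos hu _
    have h1 : ((t + t0) ^ (1/n)) ^ n = t + t0 := by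
      rw [← rpow_mul hu.le, one_div_mul_cancel hn.ne', rpow_one]
    have h2 : (C3 * (a * (t + t0) ^ (1/n))) ^ n = n * C * α1 * θ ^ n * (t + t0) := by
      rw [mul_rpow (by positivity) (by positivity), mul_rpow ha.le hv.le, h1,
        ← mul_assoc, ha_n]
    have h3 : (t + t0) ^ (1/n - 1) = (t + t0) ^ (1/n) / (t + t0) := by
      rw [rpow_sub hu, rpow_one]
    rw [h2, h3]
    have hD : (0:ℝ) < θ ^ n + n * C * α1 * θ ^ n * (t + t0) := by positivity
    rw [← mul_div_assoc, div_lt_iff₀ hD]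
    have e : a / n * ((t + t0) ^ (1/n) / (t + t0)) =
        a * (t + t0) ^ (1/n) / (n * (t + t0)) := by
      field_simp
    rw [e, div_mul_eq_mul_div, lt_div_iff₀ (by positivity : (0:ℝ) < n * (t + t0))]
    nlinarith [mul_pos (mul_pos ha hv) hθn]
  refine ⟨a, ha, t0, ht0.le, fun t ht => (hsuper t ht).le, hinit, ?_⟩
  -- comparison
  intro b hb
  set B : ℝ → ℝ := fun t => a * (t + t0) ^ (1/n) with hB_def
  set B' : ℝ → ℝ := fun t => a / n * (t + t0) ^ (1/n - 1) with hB'_def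
  have hBderiv : ∀ x : ℝ, 0 ≤ x → HasDerivAt B (B' x) x := by
    intro x hx
    have hu : (0:ℝ) < x + t0 := by linarith
    have h := (Real.hasDerivAt_rpow_const (p := 1/n) (Or.inl hu.ne')).comp x
      ((hasDerivAt_id x).add_const t0)
    have h' := h.const_mul a
    convert h' using 1
    show a / n * (x + t0) ^ (1/n - 1) = a * (1/n * (x + t0) ^ (1/n - 1) * 1)
    ring
    all_goals rfl
  have hfc : ContinuousOn S (Icc 0 b) := fun x hx =>
    (hS x hx.1).continuousAt.continuousWithinAt
  have hBc : ContinuousOn B (Icc 0 b) := fun x hx =>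
    (hBderiv x hx.1).continuousAt.continuousWithinAt
  have key : ∀ ⦃x⦄, x ∈ Icc 0 b → S x ≤ B x := by
    apply image_le_of_deriv_right_lt_deriv_boundary' hfc
      (fun x hx => (hS x hx.1).hasDerivWithinAt) ?_ hBc
      (fun x hx => (hBderiv x hx.1).hasDerivWithinAt)
    · intro x hx heq
      calc S' x ≤ C * S x * (α1 * θ ^ n / (θ ^ n + (C3 * S x) ^ n)) :=
            hineq x hx.1
        _ < B' x := by rw [heq]; exact hsuper x hx.1
    · show S 0 ≤ a * (0 + t0) ^ (1/n)
      rw [zero_add]; exact hinit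
  exact key ⟨hb, le_rfl⟩
end
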